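/- The Horn matrix H is copositive: for every vector v ∈ ℝ⁵ with all entries nonnegative, vᵀHv ≥ 0. -/
import Mathlib


open Matrix

/-- The Horn matrix. -/
def Horn : Matrix (Fin 5) (Fin 5) ℝ :=
  !![1, -1,  1,  1, -1;
    -1,  1, -1,  1,  1;
     1, -1,  1, -1,  1;
     1,  1, -1,  1, -1;
    -1,  1,  1, -1,  1]

/-- The Horn matrix is copositive. -/
theorem horn_copositive (v : Fin 5 → ℝ) (hv : ∀ i, 0 ≤ v i) :
    0 ≤ v ⬝ᵥ Horn.mulVec v := by
  have h0 := hv 0; have h1 := hv 1; have h2 := hv 2; have h3 := hv 3; have h4 := hv 4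
  have key : v ⬝ᵥ Horn.mulVec v =
      v 0 * (v 0 - v 1 + v 2 + v 3 - v 4) + v 1 * (-v 0 + v 1 - v 2 + v 3 + v 4) +
      v 2 * (v 0 - v 1 + v 2 - v 3 + v 4) + v 3 * (v 0 + v 1 - v 2 + v 3 - v 4) +
      v 4 * (-v 0 + v 1 + v 2 - v 3 + v 4) := by
    simp [dotProduct, mulVec, Horn, Fin.sum_univ_five, Matrix.vecHead, Matrix.vecTail]
    ring
  rw [key]
  rcases le_total (v 3) (v 4) with h | h
  · nlinarith [sq_nonneg (v 0 - v 1 + v 2 + v 3 - v 4), mul_nonneg h1 h3,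
      mul_nonneg h2 (sub_nonneg.2 h)]
  · nlinarith [sq_nonneg (v 0 - v 1 + v 2 - v 3 + v 4), mul_nonneg h1 h4,
      mul_nonneg h0 (sub_nonneg.2 h)]
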